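/- Every k-regular graph G satisfies pn_ℓ(G) ≤ k and pn_u(G) ≤ k + 2. -/

import Mathlib

open SimpleGraph

/-- Two edges `e₁ = s(a,c)` and `e₂ = s(b,d)` cross with respect to the spine
position function `pos` if `a ≺ b ≺ c ≺ d`. -/
def Crosses {V : Type*} (pos : V → ℕ) (e₁ e₂ : Sym2 V) : Prop :=
  ∃ a b c d : V, e₁ = s(a, c) ∧ e₂ = s(b, d) ∧
    pos a < pos b ∧ pos b < pos c ∧ pos c < pos d

/-- A linear embedding of `G`: an (injective) spine position function together with
an assignment of edges to pages (indexed by naturals). -/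
structure LinearEmbedding {V : Type*} (G : SimpleGraph V) where
  pos : V → ℕ
  inj : Function.Injective pos
  page : Sym2 V → ℕ

namespace LinearEmbedding

variable {V : Type*} {G : SimpleGraph V} (L : LinearEmbedding G)

/-- The set of indices of nonempty pages. -/
def pages : Set ℕ := {i | ∃ e ∈ G.edgeSet, L.page e = i}

/-- The number of (nonempty) pages. -/
noncomputable def pageCount : ℕ := L.pages.ncard

/-- The set of pages having an edge incident to `v`. -/
def pagesAt (v : V) : Set ℕ := {i | ∃ e ∈ G.edgeSet, v ∈ e ∧ L.page e = i}

/-- The subgraph of `G` formed by the edges on page `i`. -/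
def pageGraph (i : ℕ) : SimpleGraph V :=
  fromEdgeSet {e | e ∈ G.edgeSet ∧ L.page e = i}

/-- The set of vertices incident to an edge on page `i`. -/
def pageVerts (i : ℕ) : Set V := {v | ∃ e ∈ G.edgeSet, L.page e = i ∧ v ∈ e}

/-- The set of edges on page `i`. -/
def pageEdges (i : ℕ) : Set (Sym2 V) := {e | e ∈ G.edgeSet ∧ L.page e = i}

/-- A book embedding: no two edges on a common page cross. -/
def IsBook : Prop :=
  ∀ e₁ ∈ G.edgeSet, ∀ e₂ ∈ G.edgeSet, L.page e₁ = L.page e₂ → ¬ Crosses L.pos e₁ e₂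

/-- A `k`-local embedding: every vertex has incident edges on at most `k` pages. -/
noncomputable def IsLocal (k : ℕ) : Prop := ∀ v : V, (L.pagesAt v).ncard ≤ k

/-- A union embedding: any two edges lying on the same page and in the same
connected component of that page do not cross. -/
def IsUnion : Prop :=
  ∀ e₁ ∈ G.edgeSet, ∀ e₂ ∈ G.edgeSet, L.page e₁ = L.page e₂ →
    (∃ u v, u ∈ e₁ ∧ v ∈ e₂ ∧ (L.pageGraph (L.page e₁)).Reachable u v) →
    ¬ Crosses L.pos e₁ e₂

/-- A forest embedding: the edges of each page form a forest. -/
def IsForestEmbedding : Prop := ∀ i : ℕ, (L.pageGraph i).IsAcyclic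

end LinearEmbedding

/-- The (classical) page number of `G`. -/
noncomputable def pn {V : Type*} (G : SimpleGraph V) : ℕ :=
  sInf {k | ∃ L : LinearEmbedding G, L.IsBook ∧ L.pageCount ≤ k}

/-- The local page number of `G`. -/
noncomputable def pnLoc {V : Type*} (G : SimpleGraph V) : ℕ :=
  sInf {k | ∃ L : LinearEmbedding G, L.IsBook ∧ L.IsLocal k}

/-- The union page number of `G`. -/
noncomputable def pnUnion {V : Type*} (G : SimpleGraph V) : ℕ :=
  sInf {k | ∃ L : LinearEmbedding G, L.IsUnion ∧ L.pageCount ≤ k}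

section StarAux

variable {V : Type*}

/-- max position over an edge -/
def mxP (pos : V → ℕ) : Sym2 V → ℕ :=
  Sym2.lift ⟨fun a b => max (pos a) (pos b), fun a b => max_comm _ _⟩

/-- min position over an edge -/
def mnP (pos : V → ℕ) : Sym2 V → ℕ :=
  Sym2.lift ⟨fun a b => min (pos a) (pos b), fun a b => min_comm _ _⟩

lemma le_mxP {pos : V → ℕ} {x : V} {e : Sym2 V} (hx : x ∈ e) : pos x ≤ mxP pos e := by
  induction e using Sym2.ind with
  | _ a b =>
    rcases Sym2.mem_iff.mp hx with rfl | rfl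
    · exact le_max_left _ _
    · exact le_max_right _ _

lemma sym2_decomp (pos : V → ℕ) (e : Sym2 V) :
    ∃ a b, e = s(a, b) ∧ pos a = mnP pos e ∧ pos b = mxP pos e := by
  induction e using Sym2.ind with
  | _ a b =>
    rcases le_total (pos a) (pos b) with h | h
    · exact ⟨a, b, rfl, by simp [mnP, min_eq_left h], by simp [mxP, max_eq_right h]⟩
    · exact ⟨b, a, Sym2.eq_swap.symm, by simp [mnP, min_eq_right h],
        by simp [mxP, max_eq_left h]⟩

lemma exists_mxP (pos : V → ℕ) (e : Sym2 V) : ∃ x, x ∈ e ∧ pos x = mxP pos e := by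
  obtain ⟨a, b, rfl, _, hb⟩ := sym2_decomp pos e
  exact ⟨b, Sym2.mem_mk_right _ _, hb⟩

/-- the endpoint of an edge with maximal position -/
noncomputable def ctrV (pos : V → ℕ) (e : Sym2 V) : V := (exists_mxP pos e).choose

lemma ctrV_mem (pos : V → ℕ) (e : Sym2 V) : ctrV pos e ∈ e :=
  (exists_mxP pos e).choose_spec.1

lemma pos_ctrV (pos : V → ℕ) (e : Sym2 V) : pos (ctrV pos e) = mxP pos e :=
  (exists_mxP pos e).choose_spec.2

lemma not_crosses_of_mem {pos : V → ℕ} {e₁ e₂ : Sym2 V} {x : V}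
    (h1 : x ∈ e₁) (h2 : x ∈ e₂) : ¬ Crosses pos e₁ e₂ := by
  rintro ⟨a, b, c, d, rfl, rfl, hab, hbc, hcd⟩
  rcases Sym2.mem_iff.mp h1 with rfl | rfl <;> rcases Sym2.mem_iff.mp h2 with rfl | rfl <;> omega

/-- greedy page assignment: an edge avoids the pages of all earlier edges touching it. -/
noncomputable def pg (E : Set (Sym2 V)) (pos : V → ℕ) (e : Sym2 V) : ℕ :=
  sInf {c | ∀ f, f ∈ E → (∃ x, x ∈ e ∧ x ∈ f) → mxP pos f < mxP pos e → pg E pos f ≠ c}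
termination_by mxP pos e
decreasing_by assumption

/-- the set of earlier edges conflicting with `e` -/
def Bset (E : Set (Sym2 V)) (pos : V → ℕ) (e : Sym2 V) : Set (Sym2 V) :=
  {f | f ∈ E ∧ (∃ x, x ∈ e ∧ x ∈ f) ∧ mxP pos f < mxP pos e}

lemma pg_def (E : Set (Sym2 V)) (pos : V → ℕ) (e : Sym2 V) :
    pg E pos e = sInf ((pg E pos '' Bset E pos e)ᶜ) := by
  rw [pg]
  congr 1
  ext c
  simp only [Set.mem_setOf_eq, Set.mem_compl_iff, Set.mem_image, Bset, not_exists]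
  constructor
  · rintro h f ⟨⟨hf1, hf2, hf3⟩, hf4⟩
    exact h f hf1 hf2 hf3 hf4
  · intro h f hf1 hf2 hf3 hf4
    exact h f ⟨⟨hf1, hf2, hf3⟩, hf4⟩

lemma pg_mem (E : Set (Sym2 V)) (pos : V → ℕ) (hE : E.Finite) (e : Sym2 V) :
    pg E pos e ∈ (pg E pos '' Bset E pos e)ᶜ := by
  rw [pg_def]
  apply Nat.sInf_mem
  have hB : (Bset E pos e).Finite := hE.subset (fun f hf => hf.1)
  exact ((hB.image _).infinite_compl).nonempty

lemma pg_spec {E : Set (Sym2 V)} {pos : V → ℕ} (hE : E.Finite) {e f : Sym2 V}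
    (hf : f ∈ E) (hsh : ∃ x, x ∈ e ∧ x ∈ f) (hlt : mxP pos f < mxP pos e) :
    pg E pos f ≠ pg E pos e := by
  intro hcontra
  exact (pg_mem E pos hE e) ⟨f, ⟨hf, hsh, hlt⟩, hcontra⟩

lemma pg_lt {E : Set (Sym2 V)} {pos : V → ℕ} (hE : E.Finite) {e : Sym2 V} {k : ℕ}
    (hB : (Bset E pos e).ncard < k) : pg E pos e < k := by
  have hBfin : (Bset E pos e).Finite := hE.subset (fun f hf => hf.1)
  have himg : (pg E pos '' Bset E pos e).ncard < k :=
    lt_of_le_of_lt (Set.ncard_image_le hBfin) hB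
  have hex : ∃ c, c < k ∧ c ∉ pg E pos '' Bset E pos e := by
    by_contra h
    push_neg at h
    have hsub : Set.Iio k ⊆ pg E pos '' Bset E pos e := fun c hc => h c hc
    have := Set.ncard_le_ncard hsub (hBfin.image _)
    rw [← Finset.coe_range, Set.ncard_coe_finset, Finset.card_range] at this
    omega
  obtain ⟨c, hck, hc⟩ := hex
  calc pg E pos e ≤ c := by rw [pg_def]; exact Nat.sInf_le hc
    _ < k := hck

lemma ctr_eq {E : Set (Sym2 V)} {pos : V → ℕ} (hE : E.Finite)
    (hinj : Function.Injective pos) {e₁ e₂ : Sym2 V}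
    (h₁ : e₁ ∈ E) (h₂ : e₂ ∈ E) (hpg : pg E pos e₁ = pg E pos e₂)
    {x : V} (hx1 : x ∈ e₁) (hx2 : x ∈ e₂) : ctrV pos e₁ = ctrV pos e₂ := by
  rcases lt_trichotomy (mxP pos e₁) (mxP pos e₂) with h | h | h
  · exact absurd hpg (pg_spec hE h₁ ⟨x, hx2, hx1⟩ h)
  · exact hinj (by rw [pos_ctrV pos e₁, pos_ctrV pos e₂, h])
  · exact absurd hpg.symm (pg_spec hE h₂ ⟨x, hx1, hx2⟩ h)

lemma walk_ctr {E : Set (Sym2 V)} {pos : V → ℕ} (hE : E.Finite)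
    (hinj : Function.Injective pos) {c : ℕ} {u v : V}
    (w : (SimpleGraph.fromEdgeSet {e | e ∈ E ∧ pg E pos e = c}).Walk u v) :
    ∀ e₁, e₁ ∈ E → pg E pos e₁ = c → u ∈ e₁ →
    ∀ e₂, e₂ ∈ E → pg E pos e₂ = c → v ∈ e₂ → ctrV pos e₁ = ctrV pos e₂ := by
  induction w with
  | nil =>
    intro e₁ h1 hc1 hu e₂ h2 hc2 hv
    exact ctr_eq hE hinj h1 h2 (hc1.trans hc2.symm) hu hv
  | @cons a b d hadj p ih =>
    intro e₁ h1 hc1 hu e₂ h2 hc2 hv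
    rw [SimpleGraph.fromEdgeSet_adj] at hadj
    obtain ⟨⟨hgE, hgc⟩, _⟩ := hadj
    have h1g : ctrV pos e₁ = ctrV pos s(a, b) :=
      ctr_eq hE hinj h1 hgE (hc1.trans hgc.symm) hu (Sym2.mem_mk_left _ _)
    exact h1g.trans (ih s(a, b) hgE hgc (Sym2.mem_mk_right _ _) e₂ h2 hc2 hv)

end StarAux

/-- every `k`-regular graph `G` satisfies `pnℓ(G) ≤ k` and
`pnᵤ(G) ≤ k + 2`. -/
theorem regular_pn_bounds {V : Type*} [Fintype V] (G : SimpleGraph V)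
    [DecidableRel G.Adj] (k : ℕ) (hreg : G.IsRegularOfDegree k) :
    pnLoc G ≤ k ∧ pnUnion G ≤ k + 2 := by
  classical
  set pos : V → ℕ := fun v => ((Fintype.equivFin V) v : ℕ) with hposdef
  have hinj : Function.Injective pos := by
    intro a b h
    exact (Fintype.equivFin V).injective (Fin.val_injective h)
  have hE : G.edgeSet.Finite := Set.toFinite _
  have hdeg : ∀ v, (G.incidenceSet v).ncard = k := by
    intro v
    rw [← Nat.card_coe_set_eq, Nat.card_congr (G.incidenceSetEquivNeighborSet v),
      Nat.card_eq_fintype_card, G.card_neighborSet_eq_degree, hreg v]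
  constructor
  · -- local page number ≤ k : one page per edge
    apply Nat.sInf_le
    refine ⟨⟨pos, hinj, fun e => Nat.pair (mnP pos e) (mxP pos e)⟩, ?_, ?_⟩
    · intro e₁ h₁ e₂ h₂ hp
      have he : e₁ = e₂ := by
        obtain ⟨hmn, hmx⟩ := Nat.pair_eq_pair.mp hp
        obtain ⟨a₁, b₁, rfl, ha₁, hb₁⟩ := sym2_decomp pos e₁
        obtain ⟨a₂, b₂, rfl, ha₂, hb₂⟩ := sym2_decomp pos e₂
        have ea : a₁ = a₂ := hinj (by rw [ha₁, ha₂, hmn])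
        have eb : b₁ = b₂ := hinj (by rw [hb₁, hb₂, hmx])
        rw [ea, eb]
      subst he
      obtain ⟨x, hx, _⟩ := exists_mxP pos e₁
      exact not_crosses_of_mem hx hx
    · intro v
      have himg : ({i | ∃ e ∈ G.edgeSet, v ∈ e ∧ Nat.pair (mnP pos e) (mxP pos e) = i} : Set ℕ)
          = (fun e => Nat.pair (mnP pos e) (mxP pos e)) '' G.incidenceSet v := by
        ext i
        simp only [Set.mem_setOf_eq, Set.mem_image, SimpleGraph.incidenceSet]
        constructor
        · rintro ⟨e, he, hv, rfl⟩; exact ⟨e, ⟨he, hv⟩, rfl⟩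
        · rintro ⟨e, ⟨he, hv⟩, rfl⟩; exact ⟨e, he, hv, rfl⟩
      show ({i | ∃ e ∈ G.edgeSet, v ∈ e ∧ Nat.pair (mnP pos e) (mxP pos e) = i} : Set ℕ).ncard ≤ k
      rw [himg]
      calc ((fun e => Nat.pair (mnP pos e) (mxP pos e)) '' G.incidenceSet v).ncard
          ≤ (G.incidenceSet v).ncard :=
            Set.ncard_image_le (hE.subset (G.incidenceSet_subset v))
        _ = k := hdeg v
  · -- union page number ≤ k + 2 : greedy star forests
    have hlt : ∀ e ∈ G.edgeSet, pg G.edgeSet pos e < k := by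
      intro e he
      obtain ⟨a, b, heq, hmn, hmx⟩ := sym2_decomp pos e
      subst heq
      have hadj : G.Adj a b := G.mem_edgeSet.mp he
      have hab : pos a < pos b := by
        have hne : pos a ≠ pos b := fun h => hadj.ne (hinj h)
        simp only [mnP, mxP, Sym2.lift_mk] at hmn hmx
        omega
      have hmxe : mxP pos s(a, b) = pos b := by
        simp only [mxP, Sym2.lift_mk]; omega
      apply pg_lt hE
      have hsub : Bset G.edgeSet pos s(a, b) ⊆ G.incidenceSet a \ {s(a, b)} := by
        rintro f ⟨hfE, ⟨x, hxe, hxf⟩, hflt⟩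
        have hxle : pos x ≤ mxP pos f := le_mxP hxf
        have hxa : x = a := by
          rcases Sym2.mem_iff.mp hxe with rfl | rfl
          · rfl
          · rw [hmxe] at hflt; omega
        subst hxa
        refine ⟨⟨hfE, hxf⟩, ?_⟩
        intro hfe
        rw [Set.mem_singleton_iff] at hfe
        rw [hfe] at hflt
        omega
      have hmem : s(a, b) ∈ G.incidenceSet a := ⟨he, Sym2.mem_mk_left _ _⟩
      have hincfin : (G.incidenceSet a).Finite := hE.subset (G.incidenceSet_subset a)
      have h2 : (Bset G.edgeSet pos s(a, b)).ncard ≤ (G.incidenceSet a \ {s(a, b)}).ncard :=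
        Set.ncard_le_ncard hsub hincfin.diff
      have h3 : (G.incidenceSet a \ {s(a, b)}).ncard = k - 1 := by
        rw [Set.ncard_diff_singleton_of_mem hmem, hdeg a]
      have hk : 1 ≤ k := by
        have := hdeg a
        have hpos : 0 < (G.incidenceSet a).ncard :=
          (Set.ncard_pos hincfin).mpr ⟨s(a, b), hmem⟩
        omega
      omega
    apply Nat.sInf_le
    refine ⟨⟨pos, hinj, pg G.edgeSet pos⟩, ?_, ?_⟩
    · intro e₁ h₁ e₂ h₂ hp hreach
      obtain ⟨u, v, hu, hv, hr⟩ := hreach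
      obtain ⟨w⟩ := hr
      have hw : (SimpleGraph.fromEdgeSet
          {e | e ∈ G.edgeSet ∧ pg G.edgeSet pos e = pg G.edgeSet pos e₁}).Walk u v := w
      have hc := walk_ctr hE hinj hw e₁ h₁ rfl hu e₂ h₂ hp.symm hv
      have hm2 := ctrV_mem pos e₂
      exact not_crosses_of_mem (ctrV_mem pos e₁) (hc ▸ hm2)
    · show ({i | ∃ e ∈ G.edgeSet, pg G.edgeSet pos e = i} : Set ℕ).ncard ≤ k + 2
      have hsub : ({i | ∃ e ∈ G.edgeSet, pg G.edgeSet pos e = i} : Set ℕ) ⊆ Set.Iio k := by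
        rintro i ⟨e, he, rfl⟩
        exact hlt e he
      calc ({i | ∃ e ∈ G.edgeSet, pg G.edgeSet pos e = i} : Set ℕ).ncard
          ≤ (Set.Iio k).ncard := Set.ncard_le_ncard hsub (Set.finite_Iio k)
        _ = k := by rw [← Finset.coe_range, Set.ncard_coe_finset, Finset.card_range]
        _ ≤ k + 2 := by omega
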